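/- Let X be a Banach space and T: X → X a bounded linear operator. Then T is sensitive (there exists δ > 0 such that for every x ∈ X and ε > 0 there exist y with ‖x − y‖ < ε and n ∈ ℕ with ‖T^n x − T^n y‖ > δ) if and only if sup_{n ∈ ℕ} ‖T^n‖ = ∞. -/
import Mathlib


open Filter Topology

theorem stmt9 {X : Type*} [NormedAddCommGroup X] [NormedSpace ℝ X] [CompleteSpace X]
    (T : X →L[ℝ] X) :
    (∃ δ : ℝ, 0 < δ ∧ ∀ x : X, ∀ ε > 0, ∃ y : X, ‖x - y‖ < ε ∧
      ∃ n : ℕ, δ < ‖(T ^ n) x - (T ^ n) y‖) ↔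
    (∀ M : ℝ, ∃ n : ℕ, M < ‖T ^ n‖) := by
  constructor
  · rintro ⟨δ, hδ, hsens⟩ M
    by_contra h
    push_neg at h
    have hM0 : (0 : ℝ) ≤ M := le_trans (norm_nonneg _) (h 0)
    have hε : 0 < δ / (M + 1) := div_pos hδ (by linarith)
    obtain ⟨y, hy, n, hn⟩ := hsens 0 (δ / (M + 1)) hε
    rw [zero_sub, norm_neg] at hy
    have h1 : ‖(T ^ n) 0 - (T ^ n) y‖ = ‖(T ^ n) y‖ := by
      rw [map_zero, zero_sub, norm_neg]
    rw [h1] at hn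
    have h2 : ‖(T ^ n) y‖ ≤ ‖T ^ n‖ * ‖y‖ := (T ^ n).le_opNorm y
    have h3 : ‖T ^ n‖ * ‖y‖ ≤ M * (δ / (M + 1)) := by
      apply mul_le_mul (h n) hy.le (norm_nonneg _) hM0
    have h4 : M * (δ / (M + 1)) < δ := by
      rw [mul_div_assoc'] at *
      rw [div_lt_iff₀ (by linarith)]
      nlinarith
    linarith
  · intro h
    refine ⟨1, one_pos, fun x ε hε => ?_⟩
    obtain ⟨n, hn⟩ := h (4 / ε)
    obtain ⟨z, hz1, hz2⟩ := (T ^ n).exists_lt_apply_of_lt_opNorm hn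
    refine ⟨x - (ε / 2) • z, ?_, n, ?_⟩
    · rw [sub_sub_cancel, norm_smul, Real.norm_eq_abs, abs_of_pos (by linarith)]
      calc ε / 2 * ‖z‖ ≤ ε / 2 * 1 := by
            apply mul_le_mul_of_nonneg_left hz1.le (by linarith)
        _ < ε := by linarith
    · rw [map_sub, map_smul, sub_sub_cancel, norm_smul, Real.norm_eq_abs,
        abs_of_pos (show (0:ℝ) < ε/2 by linarith)]
      have h4 : 4 / ε < ‖(T ^ n) z‖ := hz2
      have : 0 < 4 / ε := by positivity
      calc (1 : ℝ) < ε / 2 * (4 / ε) := by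
            rw [div_mul_div_comm]
            rw [lt_div_iff₀ (by linarith)]
            ring_nf
            linarith
        _ < ε / 2 * ‖(T ^ n) z‖ := by
            apply mul_lt_mul_of_pos_left h4 (by linarith)
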